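/- The center of K is exactly the subgroup of K generated by z. -/

import Mathlib

/-- Generators of the group `H`: `x i`, `y i` for `i : Fin 18`, and `z`. -/
inductive HGen : Type
  | x : Fin 18 → HGen
  | y : Fin 18 → HGen
  | z : HGen

/-- The free-group generator corresponding to `x i`. -/
def fx (i : Fin 18) : FreeGroup HGen := FreeGroup.of (HGen.x i)
/-- The free-group generator corresponding to `y i`. -/
def fy (i : Fin 18) : FreeGroup HGen := FreeGroup.of (HGen.y i)
/-- The free-group generator corresponding to `z`. -/
def fz : FreeGroup HGen := FreeGroup.of HGen.z

/-- The relations of the presentation of `H`: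
`[xᵢ, xⱼ] = [yᵢ, yⱼ] = [xᵢ, yⱼ] = 1` for `i ≠ j`, `[xᵢ, yᵢ] = z`,
and `z` commutes with all the generators. -/
def HRels : Set (FreeGroup HGen) :=
  { r | (∃ i j : Fin 18, i ≠ j ∧ r = fx i * fx j * (fx i)⁻¹ * (fx j)⁻¹)
      ∨ (∃ i j : Fin 18, i ≠ j ∧ r = fy i * fy j * (fy i)⁻¹ * (fy j)⁻¹)
      ∨ (∃ i j : Fin 18, i ≠ j ∧ r = fx i * fy j * (fx i)⁻¹ * (fy j)⁻¹)
      ∨ (∃ i : Fin 18, r = fx i * fy i * (fx i)⁻¹ * (fy i)⁻¹ * fz⁻¹)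
      ∨ (∃ i : Fin 18, r = fx i * fz * (fx i)⁻¹ * fz⁻¹)
      ∨ (∃ i : Fin 18, r = fy i * fz * (fy i)⁻¹ * fz⁻¹) }

/-- The group `H`, given by the above presentation. -/
abbrev Hgrp : Type := PresentedGroup HRels

/-- The generator `xᵢ` of `H`. -/
def xH (i : Fin 18) : Hgrp := PresentedGroup.of (HGen.x i)
/-- The generator `yᵢ` of `H`. -/
def yH (i : Fin 18) : Hgrp := PresentedGroup.of (HGen.y i)
/-- The generator `z` of `H`. -/
def zH : Hgrp := PresentedGroup.of HGen.z


/-! ### A concrete model: the Heisenberg-type group -/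

/-- dot product of two integer vectors -/
def hdot (v w : Fin 18 → ℤ) : ℤ := ∑ i, v i * w i

lemma hdot_add (v w w' : Fin 18 → ℤ) : hdot v (w + w') = hdot v w + hdot v w' := by
  simp [hdot, mul_add, Finset.sum_add_distrib]

lemma add_hdot (v v' w : Fin 18 → ℤ) : hdot (v + v') w = hdot v w + hdot v' w := by
  simp [hdot, add_mul, Finset.sum_add_distrib]

lemma hdot_zero (v : Fin 18 → ℤ) : hdot v 0 = 0 := by simp [hdot]
lemma zero_hdot (v : Fin 18 → ℤ) : hdot 0 v = 0 := by simp [hdot]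
lemma hdot_neg (v w : Fin 18 → ℤ) : hdot v (-w) = -hdot v w := by
  simp [hdot, Finset.sum_neg_distrib]
lemma neg_hdot (v w : Fin 18 → ℤ) : hdot (-v) w = -hdot v w := by
  simp [hdot, Finset.sum_neg_distrib]

lemma hdot_single (v : Fin 18 → ℤ) (i : Fin 18) (x : ℤ) :
    hdot v (Pi.single i x) = v i * x := by
  rw [hdot]
  rw [Finset.sum_eq_single i]
  · simp
  · intro j _ hj; simp [Pi.single_eq_of_ne hj]
  · simp

lemma single_hdot (v : Fin 18 → ℤ) (i : Fin 18) (x : ℤ) :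
    hdot (Pi.single i x) v = x * v i := by
  rw [hdot]
  rw [Finset.sum_eq_single i]
  · simp
  · intro j _ hj; simp [Pi.single_eq_of_ne hj]
  · simp

@[ext] structure Heis : Type where
  a : Fin 18 → ℤ
  b : Fin 18 → ℤ
  c : ℤ

namespace Heis

instance : Mul Heis := ⟨fun g h => ⟨g.a + h.a, g.b + h.b, g.c + h.c - hdot g.b h.a⟩⟩
instance : One Heis := ⟨⟨0, 0, 0⟩⟩
instance : Inv Heis := ⟨fun g => ⟨-g.a, -g.b, -g.c - hdot g.b g.a⟩⟩

@[simp] lemma mul_a (g h : Heis) : (g * h).a = g.a + h.a := rfl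
@[simp] lemma mul_b (g h : Heis) : (g * h).b = g.b + h.b := rfl
@[simp] lemma mul_c (g h : Heis) : (g * h).c = g.c + h.c - hdot g.b h.a := rfl
@[simp] lemma one_a : (1 : Heis).a = 0 := rfl
@[simp] lemma one_b : (1 : Heis).b = 0 := rfl
@[simp] lemma one_c : (1 : Heis).c = 0 := rfl
@[simp] lemma inv_a (g : Heis) : g⁻¹.a = -g.a := rfl
@[simp] lemma inv_b (g : Heis) : g⁻¹.b = -g.b := rfl
@[simp] lemma inv_c (g : Heis) : g⁻¹.c = -g.c - hdot g.b g.a := rfl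

instance : Group Heis where
  mul_assoc g h k := by
    ext <;> simp [add_assoc, hdot_add, add_hdot] <;> ring
  one_mul g := by ext <;> simp [zero_hdot]
  mul_one g := by ext <;> simp [hdot_zero]
  inv_mul_cancel g := by ext <;> simp [neg_hdot] <;> ring

end Heis

/-- images of the generators in the concrete model -/
def fgen : HGen → Heis
  | HGen.x i => ⟨Pi.single i 1, 0, 0⟩
  | HGen.y i => ⟨0, Pi.single i 1, 0⟩
  | HGen.z => ⟨0, 0, 1⟩

lemma fgen_rels : ∀ r ∈ HRels, FreeGroup.lift fgen r = 1 := by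
  intro r hr
  have key : ∀ (i j : Fin 18), i ≠ j → (Pi.single i (1:ℤ) : Fin 18 → ℤ) j = 0 := by
    intro i j hij; exact Pi.single_eq_of_ne (Ne.symm hij) 1
  rcases hr with ⟨i, j, hij, rfl⟩ | ⟨i, j, hij, rfl⟩ | ⟨i, j, hij, rfl⟩ | ⟨i, rfl⟩ |
    ⟨i, rfl⟩ | ⟨i, rfl⟩ <;>
    simp only [fx, fy, fz, map_mul, map_inv, FreeGroup.lift_apply_of, fgen] <;>
    ext <;>
    simp [hdot_zero, zero_hdot, hdot_single, single_hdot, hdot_neg, neg_hdot,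
      Pi.single_eq_same] <;>
    first
      | (simp [key i j hij, key j i (Ne.symm hij)]; try ring)
      | ring

/-- the canonical homomorphism from `H` to the concrete model -/
def φ : Hgrp →* Heis := PresentedGroup.toGroup fgen_rels

@[simp] lemma φ_x (i : Fin 18) : φ (xH i) = ⟨Pi.single i 1, 0, 0⟩ := by
  simp [φ, xH, PresentedGroup.toGroup.of, fgen]
@[simp] lemma φ_y (i : Fin 18) : φ (yH i) = ⟨0, Pi.single i 1, 0⟩ := by
  simp [φ, yH, PresentedGroup.toGroup.of, fgen]
@[simp] lemma φ_z : φ zH = ⟨0, 0, 1⟩ := by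
  simp [φ, zH, PresentedGroup.toGroup.of, fgen]

/-! ### Relations in `Hgrp` -/

lemma relmk {r : FreeGroup HGen} (hr : r ∈ HRels) : PresentedGroup.mk HRels r = 1 :=
  (QuotientGroup.eq_one_iff r).mpr (Subgroup.subset_normalClosure hr)

lemma mk_fx (i : Fin 18) : PresentedGroup.mk HRels (fx i) = xH i := rfl
lemma mk_fy (i : Fin 18) : PresentedGroup.mk HRels (fy i) = yH i := rfl
lemma mk_fz : PresentedGroup.mk HRels fz = zH := rfl

lemma comm_xx (i j : Fin 18) : Commute (xH i) (xH j) := by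
  rcases eq_or_ne i j with rfl | hij
  · exact Commute.refl _
  · have h1 := relmk (Or.inl ⟨i, j, hij, rfl⟩)
    rw [map_mul, map_mul, map_inv, map_inv, mk_fx, mk_fx] at h1
    exact commutatorElement_eq_one_iff_commute.mp h1

lemma comm_yy (i j : Fin 18) : Commute (yH i) (yH j) := by
  rcases eq_or_ne i j with rfl | hij
  · exact Commute.refl _
  · have h1 := relmk (Or.inr (Or.inl ⟨i, j, hij, rfl⟩))
    rw [map_mul, map_mul, map_inv, map_inv, mk_fy, mk_fy] at h1
    exact commutatorElement_eq_one_iff_commute.mp h1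

lemma comm_xy {i j : Fin 18} (hij : i ≠ j) : Commute (xH i) (yH j) := by
  have h1 := relmk (Or.inr (Or.inr (Or.inl ⟨i, j, hij, rfl⟩)))
  rw [map_mul, map_mul, map_inv, map_inv, mk_fx, mk_fy] at h1
  exact commutatorElement_eq_one_iff_commute.mp h1

lemma comm_xz (i : Fin 18) : Commute (xH i) zH := by
  have h1 := relmk (Or.inr (Or.inr (Or.inr (Or.inr (Or.inl ⟨i, rfl⟩)))))
  rw [map_mul, map_mul, map_inv, map_inv, mk_fx, mk_fz] at h1
  exact commutatorElement_eq_one_iff_commute.mp h1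

lemma comm_yz (i : Fin 18) : Commute (yH i) zH := by
  have h1 := relmk (Or.inr (Or.inr (Or.inr (Or.inr (Or.inr ⟨i, rfl⟩)))))
  rw [map_mul, map_mul, map_inv, map_inv, mk_fy, mk_fz] at h1
  exact commutatorElement_eq_one_iff_commute.mp h1

lemma xyz_rel (i : Fin 18) : xH i * yH i * (xH i)⁻¹ * (yH i)⁻¹ = zH := by
  have h1 := relmk (Or.inr (Or.inr (Or.inr (Or.inl ⟨i, rfl⟩))))
  rw [map_mul, map_mul, map_mul, map_inv, map_inv, map_inv, mk_fx, mk_fy, mk_fz] at h1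
  exact mul_inv_eq_one.mp h1

/-- the basic twisted commutation: `y x = x y z⁻¹` -/
lemma yx_rel (i : Fin 18) : yH i * xH i = xH i * yH i * zH⁻¹ := by
  have h := xyz_rel i
  have : xH i * yH i = zH * (yH i * xH i) := by
    have := congrArg (· * (yH i * xH i)) h
    simpa [mul_assoc] using this
  rw [this]
  have hz : Commute zH (yH i * xH i) :=
    ((comm_yz i).symm.mul_right (comm_xz i).symm)
  rw [hz.eq]
  group

/-! ### `z` is central in `Hgrp` -/

lemma comm_z (g : Hgrp) : Commute zH g := by
  have hg : g ∈ Subgroup.centralizer {zH} := by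
    apply PresentedGroup.generated_by
    intro j
    rw [Subgroup.mem_centralizer_iff]
    rintro h rfl
    cases j with
    | x i => exact ((comm_xz i).symm.eq)
    | y i => exact ((comm_yz i).symm.eq)
    | z => rfl
  exact Subgroup.mem_centralizer_iff.mp hg zH rfl

lemma comm_zpow (k : ℤ) (g : Hgrp) : Commute (zH ^ k) g := (comm_z g).zpow_left k

lemma zslide (k : ℤ) (g : Hgrp) : g * zH ^ k = zH ^ k * g := ((comm_zpow k g).eq).symm

/-! ### twisted commutation for powers -/

lemma semiconj1 (i : Fin 18) (m : ℤ) :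
    xH i * yH i ^ m = zH ^ m * yH i ^ m * xH i := by
  have h : SemiconjBy (xH i) (yH i) (zH * yH i) := by
    have h1 := xyz_rel i
    rw [mul_inv_eq_iff_eq_mul] at h1
    show xH i * yH i = zH * yH i * xH i
    rw [← h1]; group
  have h2 := h.zpow_right m
  rwa [Commute.mul_zpow ((comm_yz i).symm)] at h2

lemma semiconj1' (i : Fin 18) (m : ℤ) :
    (xH i)⁻¹ * yH i ^ m = zH ^ (-m) * yH i ^ m * (xH i)⁻¹ := by
  have h' : zH ^ m * yH i ^ m = xH i * yH i ^ m * (xH i)⁻¹ := by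
    rw [semiconj1 i m]; group
  calc (xH i)⁻¹ * yH i ^ m
      = zH ^ (-m) * (zH ^ m * ((xH i)⁻¹ * yH i ^ m)) := by group
    _ = zH ^ (-m) * ((xH i)⁻¹ * (zH ^ m * yH i ^ m)) := by
        rw [← mul_assoc (zH ^ m), ← (zslide m _), mul_assoc]
    _ = zH ^ (-m) * ((xH i)⁻¹ * (xH i * yH i ^ m * (xH i)⁻¹)) := by rw [h']
    _ = zH ^ (-m) * yH i ^ m * (xH i)⁻¹ := by group

lemma semiconj2 (i : Fin 18) (m n : ℤ) :
    xH i ^ n * yH i ^ m = zH ^ (m * n) * yH i ^ m * xH i ^ n := by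
  induction n using Int.induction_on with
  | zero => simp
  | succ k ih =>
      have hexp : m * ((k : ℤ) + 1) = m * k + m := by ring
      calc xH i ^ ((k : ℤ) + 1) * yH i ^ m
          = xH i ^ (k : ℤ) * (xH i * yH i ^ m) := by rw [zpow_add_one]; group
        _ = xH i ^ (k : ℤ) * (zH ^ m * yH i ^ m * xH i) := by rw [semiconj1]
        _ = zH ^ m * (xH i ^ (k : ℤ) * yH i ^ m) * xH i := by
            rw [show xH i ^ (k : ℤ) * (zH ^ m * yH i ^ m * xH i)
                  = xH i ^ (k : ℤ) * zH ^ m * (yH i ^ m * xH i) from by group,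
                zslide m (xH i ^ (k : ℤ))]
            group
        _ = zH ^ m * (zH ^ (m * k) * yH i ^ m * xH i ^ (k : ℤ)) * xH i := by rw [ih]
        _ = zH ^ (m * ((k : ℤ) + 1)) * yH i ^ m * xH i ^ ((k : ℤ) + 1) := by
            rw [hexp, zpow_add, zpow_add_one]; group
  | pred k ih =>
      have hexp : m * (-(k : ℤ) - 1) = m * (-(k : ℤ)) + (-m) := by ring
      calc xH i ^ (-(k : ℤ) - 1) * yH i ^ m
          = xH i ^ (-(k : ℤ)) * ((xH i)⁻¹ * yH i ^ m) := by rw [zpow_sub_one]; group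
        _ = xH i ^ (-(k : ℤ)) * (zH ^ (-m) * yH i ^ m * (xH i)⁻¹) := by rw [semiconj1']
        _ = zH ^ (-m) * (xH i ^ (-(k : ℤ)) * yH i ^ m) * (xH i)⁻¹ := by
            rw [show xH i ^ (-(k : ℤ)) * (zH ^ (-m) * yH i ^ m * (xH i)⁻¹)
                  = xH i ^ (-(k : ℤ)) * zH ^ (-m) * (yH i ^ m * (xH i)⁻¹) from by group,
                zslide (-m) (xH i ^ (-(k : ℤ)))]
            group
        _ = zH ^ (-m) * (zH ^ (m * (-(k : ℤ))) * yH i ^ m * xH i ^ (-(k : ℤ))) * (xH i)⁻¹ := by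
            rw [ih]
        _ = zH ^ (m * (-(k : ℤ) - 1)) * yH i ^ m * xH i ^ (-(k : ℤ) - 1) := by
            rw [hexp, zpow_add, zpow_sub_one]; group

/-- the master single-generator commutation -/
lemma yx_zpow (i j : Fin 18) (m n : ℤ) :
    yH i ^ m * xH j ^ n
      = xH j ^ n * yH i ^ m * zH ^ (-(m * n * (if i = j then 1 else 0))) := by
  rcases eq_or_ne i j with rfl | hij
  · rw [if_pos rfl, mul_one]
    have h := semiconj2 i m n
    calc yH i ^ m * xH i ^ n
        = zH ^ (-(m * n)) * (zH ^ (m * n) * (yH i ^ m * xH i ^ n)) := by group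
      _ = zH ^ (-(m * n)) * (xH i ^ n * yH i ^ m) := by
          rw [← mul_assoc (zH ^ (m * n))]
          rw [← h]
      _ = xH i ^ n * yH i ^ m * zH ^ (-(m * n)) := by
          rw [zslide (-(m * n))]
  · simp only [if_neg hij, mul_zero, neg_zero, zpow_zero, mul_one]
    exact (((comm_xy (Ne.symm hij)).symm).zpow_zpow m n).eq

/-! ### products of generators -/

def XXl (l : List (Fin 18)) (a : Fin 18 → ℤ) : Hgrp := (l.map fun i => xH i ^ a i).prod
def YYl (l : List (Fin 18)) (b : Fin 18 → ℤ) : Hgrp := (l.map fun i => yH i ^ b i).prod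
def XX (a : Fin 18 → ℤ) : Hgrp := XXl (List.finRange 18) a
def YY (b : Fin 18 → ℤ) : Hgrp := YYl (List.finRange 18) b

@[simp] lemma XXl_nil (a) : XXl [] a = 1 := rfl
@[simp] lemma YYl_nil (b) : YYl [] b = 1 := rfl
lemma XXl_cons (i l a) : XXl (i :: l) a = xH i ^ a i * XXl l a := by
  simp [XXl]
lemma YYl_cons (i l b) : YYl (i :: l) b = yH i ^ b i * YYl l b := by
  simp [YYl]

lemma comm_XXl {g : Hgrp} (h : ∀ i : Fin 18, ∀ n : ℤ, Commute g (xH i ^ n)) (l a) :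
    Commute g (XXl l a) := by
  apply Commute.list_prod_right
  intro u hu
  rcases List.mem_map.mp hu with ⟨i, -, rfl⟩
  exact h i (a i)

lemma comm_YYl {g : Hgrp} (h : ∀ i : Fin 18, ∀ n : ℤ, Commute g (yH i ^ n)) (l b) :
    Commute g (YYl l b) := by
  apply Commute.list_prod_right
  intro u hu
  rcases List.mem_map.mp hu with ⟨i, -, rfl⟩
  exact h i (b i)

lemma comm_zpow_XXl (k : ℤ) (l) (a) : Commute (zH ^ k) (XXl l a) :=
  comm_XXl (fun i n => comm_zpow k _) l a
lemma comm_zpow_YYl (k : ℤ) (l) (b) : Commute (zH ^ k) (YYl l b) :=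
  comm_YYl (fun i n => comm_zpow k _) l b

lemma XXl_add (l a a') : XXl l (a + a') = XXl l a * XXl l a' := by
  induction l with
  | nil => simp
  | cons j l ih =>
      have hc : Commute (xH j ^ a' j) (XXl l a) :=
        comm_XXl (fun i n => (comm_xx j i).zpow_zpow _ _) l a
      rw [XXl_cons, XXl_cons, XXl_cons, Pi.add_apply, zpow_add, ih]
      calc xH j ^ a j * xH j ^ a' j * (XXl l a * XXl l a')
          = xH j ^ a j * (xH j ^ a' j * XXl l a) * XXl l a' := by group
        _ = xH j ^ a j * (XXl l a * xH j ^ a' j) * XXl l a' := by rw [hc.eq]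
        _ = xH j ^ a j * XXl l a * (xH j ^ a' j * XXl l a') := by group

lemma YYl_add (l b b') : YYl l (b + b') = YYl l b * YYl l b' := by
  induction l with
  | nil => simp
  | cons j l ih =>
      have hc : Commute (yH j ^ b' j) (YYl l b) :=
        comm_YYl (fun i n => (comm_yy j i).zpow_zpow _ _) l b
      rw [YYl_cons, YYl_cons, YYl_cons, Pi.add_apply, zpow_add, ih]
      calc yH j ^ b j * yH j ^ b' j * (YYl l b * YYl l b')
          = yH j ^ b j * (yH j ^ b' j * YYl l b) * YYl l b' := by group
        _ = yH j ^ b j * (YYl l b * yH j ^ b' j) * YYl l b' := by rw [hc.eq]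
        _ = yH j ^ b j * YYl l b * (yH j ^ b' j * YYl l b') := by group

lemma XXl_zero_of (l) (a) (h : ∀ j ∈ l, a j = 0) : XXl l a = 1 := by
  induction l with
  | nil => rfl
  | cons j l ih =>
      rw [XXl_cons, h j List.mem_cons_self, zpow_zero, one_mul]
      exact ih fun k hk => h k (List.mem_cons_of_mem _ hk)

lemma YYl_zero_of (l) (b) (h : ∀ j ∈ l, b j = 0) : YYl l b = 1 := by
  induction l with
  | nil => rfl
  | cons j l ih =>
      rw [YYl_cons, h j List.mem_cons_self, zpow_zero, one_mul]
      exact ih fun k hk => h k (List.mem_cons_of_mem _ hk)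

@[simp] lemma XX_zero : XX 0 = 1 := XXl_zero_of _ _ (by simp)
@[simp] lemma YY_zero : YY 0 = 1 := YYl_zero_of _ _ (by simp)

lemma XXl_single (l : List (Fin 18)) (hl : l.Nodup) (i : Fin 18) (hi : i ∈ l) (c : ℤ) :
    XXl l (Pi.single i c) = xH i ^ c := by
  induction l with
  | nil => cases hi
  | cons j l ih =>
      have hnd := List.nodup_cons.mp hl
      rcases List.mem_cons.mp hi with rfl | hi'
      · have hz : XXl l (Pi.single i c) = 1 := by
          apply XXl_zero_of
          intro k hk
          rw [Pi.single_apply]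
          exact if_neg (fun (h : k = i) => hnd.1 (h ▸ hk))
        rw [XXl_cons, Pi.single_eq_same, hz, mul_one]
      · have hne : j ≠ i := fun (h : j = i) => hnd.1 (h.symm ▸ hi')
        have hs : (Pi.single i c : Fin 18 → ℤ) j = 0 := by
          rw [Pi.single_apply]; exact if_neg hne
        rw [XXl_cons, hs, zpow_zero, one_mul]
        exact ih hnd.2 hi'

lemma YYl_single (l : List (Fin 18)) (hl : l.Nodup) (i : Fin 18) (hi : i ∈ l) (c : ℤ) :
    YYl l (Pi.single i c) = yH i ^ c := by
  induction l with
  | nil => cases hi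
  | cons j l ih =>
      have hnd := List.nodup_cons.mp hl
      rcases List.mem_cons.mp hi with rfl | hi'
      · have hz : YYl l (Pi.single i c) = 1 := by
          apply YYl_zero_of
          intro k hk
          rw [Pi.single_apply]
          exact if_neg (fun (h : k = i) => hnd.1 (h ▸ hk))
        rw [YYl_cons, Pi.single_eq_same, hz, mul_one]
      · have hne : j ≠ i := fun (h : j = i) => hnd.1 (h.symm ▸ hi')
        have hs : (Pi.single i c : Fin 18 → ℤ) j = 0 := by
          rw [Pi.single_apply]; exact if_neg hne
        rw [YYl_cons, hs, zpow_zero, one_mul]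
        exact ih hnd.2 hi'

lemma XX_single (i : Fin 18) (c : ℤ) : XX (Pi.single i c) = xH i ^ c :=
  XXl_single _ (List.nodup_finRange 18) i (List.mem_finRange i) c
lemma YY_single (i : Fin 18) (c : ℤ) : YY (Pi.single i c) = yH i ^ c :=
  YYl_single _ (List.nodup_finRange 18) i (List.mem_finRange i) c

/-! ### moving `y`-powers past `x`-products -/

lemma y_past_XXl (i : Fin 18) (m : ℤ) (l a) :
    yH i ^ m * XXl l a
      = XXl l a * yH i ^ m
          * zH ^ (-((l.map fun j => m * a j * (if i = j then 1 else 0)).sum)) := by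
  induction l with
  | nil => simp
  | cons j l ih =>
      rw [XXl_cons, List.map_cons, List.sum_cons]
      set d : ℤ := m * a j * (if i = j then 1 else 0) with hd
      set S : ℤ := (l.map fun j => m * a j * (if i = j then 1 else 0)).sum with hS
      have h1 : yH i ^ m * xH j ^ a j = xH j ^ a j * yH i ^ m * zH ^ (-d) := yx_zpow i j m (a j)
      have hslide : Commute (zH ^ (-d)) (XXl l a) := comm_zpow_XXl (-d) l a
      calc yH i ^ m * (xH j ^ a j * XXl l a)
          = (yH i ^ m * xH j ^ a j) * XXl l a := by group
        _ = xH j ^ a j * yH i ^ m * zH ^ (-d) * XXl l a := by rw [h1]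
        _ = xH j ^ a j * (yH i ^ m * (zH ^ (-d) * XXl l a)) := by group
        _ = xH j ^ a j * (yH i ^ m * (XXl l a * zH ^ (-d))) := by rw [hslide.eq]
        _ = xH j ^ a j * (yH i ^ m * XXl l a) * zH ^ (-d) := by group
        _ = xH j ^ a j * (XXl l a * yH i ^ m * zH ^ (-S)) * zH ^ (-d) := by rw [ih]
        _ = xH j ^ a j * XXl l a * yH i ^ m * zH ^ (-(d + S)) := by
            rw [neg_add, zpow_add]; group

lemma y_past_XX (i : Fin 18) (m : ℤ) (a) :
    yH i ^ m * XX a = XX a * yH i ^ m * zH ^ (-(m * a i)) := by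
  have hsum : ((List.finRange 18).map fun j => m * a j * (if i = j then 1 else 0)).sum
      = m * a i := by
    rw [← Fin.sum_univ_def]
    simp [mul_ite, mul_one, mul_zero, Finset.sum_ite_eq]
  rw [XX, y_past_XXl, hsum]

lemma YY_past_XX (l) (b a) :
    YYl l b * XX a = XX a * YYl l b * zH ^ (-((l.map fun j => b j * a j).sum)) := by
  induction l with
  | nil => simp
  | cons j l ih =>
      rw [YYl_cons, List.map_cons, List.sum_cons]
      set d : ℤ := b j * a j with hd
      set S : ℤ := (l.map fun j => b j * a j).sum with hS
      have hslide : Commute (zH ^ (-d)) (YYl l b) := comm_zpow_YYl (-d) l b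
      calc yH j ^ b j * YYl l b * XX a
          = yH j ^ b j * (YYl l b * XX a) := by group
        _ = yH j ^ b j * (XX a * YYl l b * zH ^ (-S)) := by rw [ih]
        _ = (yH j ^ b j * XX a) * (YYl l b * zH ^ (-S)) := by group
        _ = (XX a * yH j ^ b j * zH ^ (-d)) * (YYl l b * zH ^ (-S)) := by rw [y_past_XX]
        _ = XX a * yH j ^ b j * (zH ^ (-d) * YYl l b) * zH ^ (-S) := by group
        _ = XX a * yH j ^ b j * (YYl l b * zH ^ (-d)) * zH ^ (-S) := by rw [hslide.eq]
        _ = XX a * (yH j ^ b j * YYl l b) * zH ^ (-(d + S)) := by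
            rw [neg_add, zpow_add]; group

lemma YY_past_XX' (b a) : YY b * XX a = XX a * YY b * zH ^ (-(hdot b a)) := by
  have hsum : ((List.finRange 18).map fun j => b j * a j).sum = hdot b a := by
    rw [← Fin.sum_univ_def]; rfl
  rw [YY, YY_past_XX, hsum]

/-! ### the inverse homomorphism `ψ` -/

lemma XX_add (a a' : Fin 18 → ℤ) : XX (a + a') = XX a * XX a' := XXl_add _ _ _
lemma YY_add (b b' : Fin 18 → ℤ) : YY (b + b') = YY b * YY b' := YYl_add _ _ _

def ψf (g : Heis) : Hgrp := XX g.a * YY g.b * zH ^ g.c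

lemma ψf_mul (g g' : Heis) : ψf (g * g') = ψf g * ψf g' := by
  rcases g with ⟨a, b, c⟩; rcases g' with ⟨a', b', c'⟩
  show XX (a + a') * YY (b + b') * zH ^ (c + c' - hdot b a')
      = XX a * YY b * zH ^ c * (XX a' * YY b' * zH ^ c')
  have h1 : Commute (zH ^ c) (XX a' * YY b' * zH ^ c') := comm_zpow c _
  have h2 : Commute (zH ^ (-(hdot b a'))) (YY b') := comm_zpow _ _
  symm
  calc XX a * YY b * zH ^ c * (XX a' * YY b' * zH ^ c')
      = XX a * YY b * (zH ^ c * (XX a' * YY b' * zH ^ c')) := by group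
    _ = XX a * YY b * (XX a' * YY b' * zH ^ c' * zH ^ c) := by rw [h1.eq]
    _ = XX a * (YY b * XX a') * (YY b' * (zH ^ c' * zH ^ c)) := by group
    _ = XX a * (XX a' * YY b * zH ^ (-(hdot b a'))) * (YY b' * (zH ^ c' * zH ^ c)) := by
        rw [YY_past_XX']
    _ = XX a * XX a' * (YY b * (zH ^ (-(hdot b a')) * YY b')) * (zH ^ c' * zH ^ c) := by group
    _ = XX a * XX a' * (YY b * (YY b' * zH ^ (-(hdot b a')))) * (zH ^ c' * zH ^ c) := by
        rw [h2.eq]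
    _ = XX a * XX a' * (YY b * YY b') * (zH ^ (-(hdot b a')) * zH ^ c' * zH ^ c) := by group
    _ = XX (a + a') * YY (b + b') * zH ^ (c + c' - hdot b a') := by
        rw [XX_add, YY_add, show c + c' - hdot b a' = -(hdot b a') + c' + c from by ring,
          zpow_add, zpow_add]

def ψ : Heis →* Hgrp := MonoidHom.mk' ψf ψf_mul

lemma ψ_apply (g : Heis) : ψ g = XX g.a * YY g.b * zH ^ g.c := rfl

lemma ψ_comp_φ : ψ.comp φ = MonoidHom.id Hgrp := by
  apply PresentedGroup.ext
  intro g
  cases g with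
  | x i =>
      show ψ (φ (xH i)) = xH i
      rw [φ_x, ψ_apply]
      show XX (Pi.single i 1) * YY 0 * zH ^ (0:ℤ) = xH i
      rw [XX_single, YY_zero, zpow_zero, mul_one, mul_one, zpow_one]
  | y i =>
      show ψ (φ (yH i)) = yH i
      rw [φ_y, ψ_apply]
      show XX 0 * YY (Pi.single i 1) * zH ^ (0:ℤ) = yH i
      rw [XX_zero, YY_single, zpow_zero, one_mul, mul_one, zpow_one]
  | z =>
      show ψ (φ zH) = zH
      rw [φ_z, ψ_apply]
      show XX 0 * YY 0 * zH ^ (1:ℤ) = zH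
      rw [XX_zero, YY_zero, zpow_one, one_mul, one_mul]

lemma ψφ (h : Hgrp) : ψ (φ h) = h := DFunLike.congr_fun ψ_comp_φ h

lemma φ_injective : Function.Injective φ :=
  Function.LeftInverse.injective ψφ

/-! ### the abelianization map factors through `φ` -/

def toZZ : Heis →* Multiplicative (ℤ × ℤ) where
  toFun g := Multiplicative.ofAdd (∑ i, g.a i, ∑ i, g.b i)
  map_one' := by
    show Multiplicative.ofAdd (∑ i, (0:ℤ), ∑ i, (0:ℤ)) = 1
    simp
  map_mul' g g' := by
    show Multiplicative.ofAdd (∑ i, (g.a i + g'.a i), ∑ i, (g.b i + g'.b i)) = _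
    rw [Finset.sum_add_distrib, Finset.sum_add_distrib]
    rfl

/-! ### computations of `φ` on kernel elements -/

lemma φ_xdiff (i j : Fin 18) :
    φ (xH i * (xH j)⁻¹) = ⟨Pi.single i 1 - Pi.single j 1, 0, 0⟩ := by
  rw [map_mul, map_inv, φ_x, φ_x]
  ext <;> simp [hdot_zero, zero_hdot, hdot_neg, neg_hdot, hdot_single, single_hdot,
    sub_eq_add_neg]

lemma φ_ydiff (i j : Fin 18) :
    φ (yH i * (yH j)⁻¹) = ⟨0, Pi.single i 1 - Pi.single j 1, 0⟩ := by
  rw [map_mul, map_inv, φ_y, φ_y]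
  ext <;> simp [hdot_zero, zero_hdot, hdot_neg, neg_hdot, hdot_single, single_hdot,
    sub_eq_add_neg]


/-- The center of `K = ker(ab)` is exactly the subgroup of `K` generated
by `z`. -/
theorem stmt13 (ab : Hgrp →* Multiplicative (ℤ × ℤ))
    (habx : ∀ i : Fin 18, ab (xH i) = Multiplicative.ofAdd (1, 0))
    (haby : ∀ i : Fin 18, ab (yH i) = Multiplicative.ofAdd (0, 1))
    (habz : ab zH = 1) :
    ∃ hzK : zH ∈ ab.ker,
      Subgroup.center ↥ab.ker = Subgroup.closure {(⟨zH, hzK⟩ : ↥ab.ker)} := by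
  have hz : zH ∈ ab.ker := MonoidHom.mem_ker.mpr habz
  refine ⟨hz, ?_⟩
  have hcomp : ab = toZZ.comp φ := by
    apply PresentedGroup.ext
    intro t
    cases t with
    | x i =>
        show ab (xH i) = toZZ (φ (xH i))
        rw [habx, φ_x]
        show _ = Multiplicative.ofAdd (∑ k, Pi.single i (1:ℤ) k, ∑ k, (0:ℤ))
        simp [Finset.sum_pi_single']
    | y i =>
        show ab (yH i) = toZZ (φ (yH i))
        rw [haby, φ_y]
        show _ = Multiplicative.ofAdd (∑ k, (0:ℤ), ∑ k, Pi.single i (1:ℤ) k)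
        simp [Finset.sum_pi_single']
    | z =>
        show ab zH = toZZ (φ zH)
        rw [habz, φ_z]
        show _ = Multiplicative.ofAdd (∑ k, (0:ℤ), ∑ k, (0:ℤ))
        simp
        rfl
  apply le_antisymm
  · -- center ≤ ⟨z⟩
    intro g hg
    have hcomm : ∀ k : Hgrp, k ∈ ab.ker → (g : Hgrp) * k = k * (g : Hgrp) := by
      intro k hk
      have := Subgroup.mem_center_iff.mp hg ⟨k, hk⟩
      exact (congrArg Subtype.val this).symm
    have hxk : ∀ i j : Fin 18, xH i * (xH j)⁻¹ ∈ ab.ker := by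
      intro i j
      rw [MonoidHom.mem_ker, map_mul, map_inv, habx, habx, mul_inv_cancel]
    have hyk : ∀ i j : Fin 18, yH i * (yH j)⁻¹ ∈ ab.ker := by
      intro i j
      rw [MonoidHom.mem_ker, map_mul, map_inv, haby, haby, mul_inv_cancel]
    set G : Heis := φ (g : Hgrp) with hG
    have hb : ∀ i j : Fin 18, G.b i = G.b j := by
      intro i j
      have e : φ (g : Hgrp) * φ (xH i * (xH j)⁻¹) = φ (xH i * (xH j)⁻¹) * φ (g : Hgrp) := by
        rw [← map_mul, ← map_mul, hcomm _ (hxk i j)]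
      rw [φ_xdiff, ← hG] at e
      have ec := congrArg Heis.c e
      simp [hdot_add, hdot_neg, hdot_single, zero_hdot, sub_eq_add_neg] at ec
      linarith
    have ha : ∀ i j : Fin 18, G.a i = G.a j := by
      intro i j
      have e : φ (g : Hgrp) * φ (yH i * (yH j)⁻¹) = φ (yH i * (yH j)⁻¹) * φ (g : Hgrp) := by
        rw [← map_mul, ← map_mul, hcomm _ (hyk i j)]
      rw [φ_ydiff, ← hG] at e
      have ec := congrArg Heis.c e
      simp [add_hdot, neg_hdot, single_hdot, hdot_zero, sub_eq_add_neg] at ec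
      linarith
    have hker2 : toZZ G = 1 := by
      rw [hG]
      exact (DFunLike.congr_fun hcomp (g : Hgrp)).symm.trans (MonoidHom.mem_ker.mp g.2)
    have hsum : (∑ k, G.a k, ∑ k, G.b k) = ((0 : ℤ), (0 : ℤ)) := by
      simpa [toZZ, Prod.ext_iff] using hker2
    have hsa : ∑ k, G.a k = 0 := congrArg Prod.fst hsum
    have hsb : ∑ k, G.b k = 0 := congrArg Prod.snd hsum
    have ha0 : G.a = 0 := by
      funext i
      have h18 : ∑ k, G.a k = ∑ _k : Fin 18, G.a i :=
        Finset.sum_congr rfl fun k _ => ha k i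
      rw [hsa, Finset.sum_const, Finset.card_univ, Fintype.card_fin, nsmul_eq_mul] at h18
      have : (18 : ℤ) * G.a i = 0 := h18.symm
      have := mul_eq_zero.mp this
      simpa using this
    have hb0 : G.b = 0 := by
      funext i
      have h18 : ∑ k, G.b k = ∑ _k : Fin 18, G.b i :=
        Finset.sum_congr rfl fun k _ => hb k i
      rw [hsb, Finset.sum_const, Finset.card_univ, Fintype.card_fin, nsmul_eq_mul] at h18
      have : (18 : ℤ) * G.b i = 0 := h18.symm
      have := mul_eq_zero.mp this
      simpa using this
    have hGeq : G = ⟨0, 0, G.c⟩ := by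
      rcases hGG : G with ⟨Ga, Gb, Gc⟩
      have h1 : Ga = 0 := by rw [← ha0, hGG]
      have h2 : Gb = 0 := by rw [← hb0, hGG]
      rw [h1, h2]
    have hval : (g : Hgrp) = zH ^ G.c := by
      calc (g : Hgrp) = ψ (φ (g : Hgrp)) := (ψφ _).symm
        _ = ψ ⟨0, 0, G.c⟩ := by rw [← hG, hGeq]
        _ = XX 0 * YY 0 * zH ^ G.c := rfl
        _ = zH ^ G.c := by rw [XX_zero, YY_zero, one_mul, one_mul]
    rw [Subgroup.mem_closure_singleton]
    refine ⟨G.c, Subtype.ext ?_⟩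
    rw [SubgroupClass.coe_zpow]
    exact hval.symm
  · -- ⟨z⟩ ≤ center
    apply (Subgroup.closure_le _).mpr
    rw [Set.singleton_subset_iff]
    show (⟨zH, hz⟩ : ↥ab.ker) ∈ Subgroup.center ↥ab.ker
    rw [Subgroup.mem_center_iff]
    intro k
    exact Subtype.ext ((comm_z (k : Hgrp)).eq.symm)
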